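/- Let V be a finite-dimensional real vector space, Γ a nilpotent group generated by a set S, and ρ : Γ → Aff(V) a homomorphism such that ρ(s) is unipotent for every s ∈ S. Then ρ(γ) is unipotent for every γ ∈ Γ. Consequently, if Γ is generated by finitely many elements γ_1, …, γ_m, then Hom_u(Γ, Aff(V)) is the intersection of Hom(Γ, Aff(V)) ⊆ Aff(V)^m with the common zero set of finitely many polynomials with rational coefficients in the matrix entries, namely the entries of the equations (ρ(γ_i) − id)^{dim V + 1} = 0 in GL(V ⊕ ℝ). -/

import Mathlib

noncomputable section

/-- The image of an affine transformation `g : v ↦ Av + b` of `V` in `GL(V ⊕ ℝ)`,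
as the linear endomorphism `(v, t) ↦ (Av + t • b, t)` of `V × ℝ`, corresponding to the
block matrix `(A b; 0 1)`. -/
def affToLin {V : Type*} [NormedAddCommGroup V] [NormedSpace ℝ V]
    (g : V ≃ᵃ[ℝ] V) : Module.End ℝ (V × ℝ) :=
  LinearMap.prod
    (((g.linear : V →ₗ[ℝ] V).comp (LinearMap.fst ℝ V ℝ)) +
      ((LinearMap.toSpanSingleton ℝ V (g 0)).comp (LinearMap.snd ℝ V ℝ)))
    (LinearMap.snd ℝ V ℝ)

/-- An affine transformation is unipotent if its image in `GL(V ⊕ ℝ)` is the identity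
plus a nilpotent endomorphism. -/
def IsUnipotentAff {V : Type*} [NormedAddCommGroup V] [NormedSpace ℝ V]
    (g : V ≃ᵃ[ℝ] V) : Prop :=
  IsNilpotent (affToLin g - 1)


section RingLemmas
variable {R : Type*} [Ring R]

lemma conj_pow_helper (a u b : R) (hba : b * a = 1) (n : ℕ) :
    (a * u * b) ^ n = a * u ^ n * b ∨ n = 0 := by
  induction n with
  | zero => exact Or.inr rfl
  | succ m ih =>
    left
    rcases ih with h | h
    · rw [pow_succ, h, pow_succ]
      calc a * u ^ m * b * (a * u * b) = a * u ^ m * (b * a) * u * b := by noncomm_ring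
        _ = a * (u ^ m * u) * b := by rw [hba]; noncomm_ring
    · subst h; simp [pow_one]

lemma isNilpotent_conj {u a b : R} (hab : a * b = 1) (hba : b * a = 1)
    (hu : IsNilpotent (u - 1)) : IsNilpotent (a * u * b - 1) := by
  obtain ⟨n, hn⟩ := hu
  refine ⟨n + 1, ?_⟩
  have h1 : a * u * b - 1 = a * (u - 1) * b := by
    have : a * (u - 1) * b = a * u * b - a * b := by noncomm_ring
    rw [this, hab]
  rw [h1]
  rcases conj_pow_helper a (u-1) b hba (n+1) with h | h
  · rw [h, pow_succ, hn]; simp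
  · simp at h

lemma isNilpotent_inv {u v : R} (huv : u * v = 1) (hvu : v * u = 1)
    (hu : IsNilpotent (u - 1)) : IsNilpotent (v - 1) := by
  have hcomm : Commute (u - 1) v := by
    have : Commute u v := by
      unfold Commute SemiconjBy
      rw [huv, hvu]
    exact (this.sub_left (Commute.one_left v))
  have h1 : v - 1 = -((u - 1) * v) := by
    have : (u - 1) * v = u * v - v := by noncomm_ring
    rw [this, huv]; noncomm_ring
  rw [h1]
  exact (hcomm.isNilpotent_mul_right hu).neg

lemma isNilpotent_mul_of_commute {u v : R} (h : Commute u v)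
    (hu : IsNilpotent (u - 1)) (hv : IsNilpotent (v - 1)) :
    IsNilpotent (u * v - 1) := by
  have h1 : u * v - 1 = u * (v - 1) + (u - 1) := by noncomm_ring
  rw [h1]
  have hc1 : Commute u (v - 1) := h.sub_right (Commute.one_right u)
  have hA : IsNilpotent (u * (v - 1)) := hc1.isNilpotent_mul_left hv
  have hc2 : Commute (u * (v - 1)) (u - 1) := by
    have c1 : Commute u (u - 1) := (Commute.refl u).sub_right (Commute.one_right u)
    have c2 : Commute (v - 1) (u - 1) :=
      (h.symm.sub_left (Commute.one_left u)).sub_right (Commute.one_right (v-1))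
    exact c1.mul_left c2
  exact hc2.isNilpotent_add hA hu

end RingLemmas

section LinearLemmas
variable {k : Type*} [Field k] {W : Type*} [AddCommGroup W] [Module k W]

/-- Schur-type: a nilpotent endomorphism commuting with an irreducible action is zero. -/
lemma nilpotent_commuting_eq_zero {Γ : Type*} [Monoid Γ] (π : Γ →* Module.End k W)
    (hirr : ∀ p : Submodule k W, (∀ γ : Γ, p.map (π γ) ≤ p) → p = ⊥ ∨ p = ⊤)
    (e : Module.End k W) (he : IsNilpotent e) (hcomm : ∀ γ : Γ, Commute e (π γ)) :
    e = 0 := by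
  have hinv : ∀ γ : Γ, (LinearMap.ker e).map (π γ) ≤ LinearMap.ker e := by
    intro γ x hx
    obtain ⟨y, hy, rfl⟩ := hx
    have h3 := LinearMap.congr_fun ((hcomm γ).eq) y
    simp only [Module.End.mul_apply] at h3
    simp only [LinearMap.mem_ker] at hy ⊢
    rw [h3, hy, map_zero]
  rcases hirr _ hinv with hbot | htop
  · -- e injective; nilpotent injective forces subsingleton
    have hinj : ∀ x : W, e x = 0 → x = 0 := by
      intro x hx
      have : x ∈ LinearMap.ker e := hx
      rw [hbot] at this
      simpa using this
    obtain ⟨n, hn⟩ := he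
    have key : ∀ m : ℕ, (e ^ m : Module.End k W) = 0 → ∀ x : W, x = 0 := by
      intro m
      induction m with
      | zero =>
        intro h x
        have := congrFun (congrArg DFunLike.coe h) x
        simpa using this
      | succ p ih =>
        intro h x
        have h2 : (e ^ p : Module.End k W) = 0 := by
          ext y
          have := congrFun (congrArg DFunLike.coe h) y
          rw [pow_succ'] at this
          simp only [Module.End.mul_apply, LinearMap.zero_apply] at this ⊢
          exact hinj _ this
        exact ih h2 x
    ext x
    simp [key n hn x]
  · rw [LinearMap.ker_eq_top] at htop
    exact htop

variable (p : Submodule k W)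

lemma restrict_pow_sub_one_apply (f : Module.End k W) (hf : ∀ x ∈ p, f x ∈ p)
    (m : ℕ) (x : p) :
    (((f.restrict hf - 1) ^ m) x : W) = ((f - 1) ^ m) (x : W) := by
  induction m generalizing x with
  | zero => simp
  | succ q ih =>
    rw [pow_succ, pow_succ]
    simp only [Module.End.mul_apply]
    rw [ih ((f.restrict hf - 1) x)]
    congr 1

lemma quot_pow_sub_one_apply (f : Module.End k W) (hf : p ≤ p.comap f)
    (m : ℕ) (x : W) :
    ((p.mapQ p f hf - 1) ^ m) (Submodule.Quotient.mk x)
      = Submodule.Quotient.mk (((f - 1) ^ m) x) := by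
  induction m generalizing x with
  | zero => simp
  | succ q ih =>
    rw [pow_succ, pow_succ]
    simp only [Module.End.mul_apply]
    rw [show ((p.mapQ p f hf - 1) (Submodule.Quotient.mk x) : W ⧸ p)
        = Submodule.Quotient.mk (f x - x) by
      simp [Submodule.mapQ_apply, Submodule.Quotient.mk_sub]]
    rw [ih (f x - x)]
    congr 1

end LinearLemmas

section IrrCase
variable {k : Type*} [Field k] {W : Type*} [AddCommGroup W] [Module k W]
variable {Γ : Type*} [Group Γ]

/-- helper: if `π c = 1` and `a = c * b` then `π a = π b`. -/
lemma pi_eq_of_eq_mul (π : Γ →* Module.End k W) {a b c : Γ} (h : a = c * b)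
    (hc : π c = 1) : π a = π b := by
  rw [h, map_mul, hc, one_mul]

lemma commute_of_commutator_eq_one (π : Γ →* Module.End k W) {x g : Γ}
    (h : π (x * g * x⁻¹ * g⁻¹) = 1) : Commute (π x) (π g) := by
  have h2 : π (x * g) = π (g * x) := by
    refine pi_eq_of_eq_mul π ?_ h
    group
  unfold Commute SemiconjBy
  rw [← map_mul, ← map_mul, h2]

lemma irr_commutator_eq_one (π : Γ →* Module.End k W)
    (hirr : ∀ p : Submodule k W, (∀ γ : Γ, p.map (π γ) ≤ p) → p = ⊥ ∨ p = ⊤) :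
    ∀ (i : ℕ) (x g : Γ), IsNilpotent (π x - 1) →
      x * g * x⁻¹ * g⁻¹ ∈ Subgroup.upperCentralSeries Γ i → π (x * g * x⁻¹ * g⁻¹) = 1 := by
  intro i
  induction i with
  | zero =>
    intro x g _ hmem
    rw [Subgroup.upperCentralSeries_zero] at hmem
    rw [Subgroup.mem_bot] at hmem
    rw [hmem, map_one]
  | succ i IH =>
    intro x g hx hmem
    set z := x * g * x⁻¹ * g⁻¹ with hz
    -- Step 1 : π x commutes with π z
    have h1 : x * z * x⁻¹ * z⁻¹ ∈ Subgroup.upperCentralSeries Γ i := by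
      have := (Subgroup.mem_upperCentralSeries_succ_iff.mp hmem) x
      have heq : x * z * x⁻¹ * z⁻¹ = (z * x * z⁻¹ * x⁻¹)⁻¹ := by group
      rw [heq]
      exact (Subgroup.upperCentralSeries Γ i).inv_mem this
    have hxz : Commute (π x) (π z) :=
      commute_of_commutator_eq_one π (IH x z hx h1)
    -- Step 2 : π z is unipotent
    have hzunip : IsNilpotent (π z - 1) := by
      have hxy : z = x * (g * x⁻¹ * g⁻¹) := by rw [hz]; group
      set y := g * x⁻¹ * g⁻¹ with hy
      have hinv : IsNilpotent (π x⁻¹ - 1) := by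
        refine isNilpotent_inv ?_ ?_ hx <;>
          rw [← map_mul] <;> simp
      have hyunip : IsNilpotent (π y - 1) := by
        have : π y = π g * π x⁻¹ * π g⁻¹ := by rw [hy, map_mul, map_mul]
        rw [this]
        refine isNilpotent_conj ?_ ?_ hinv <;> rw [← map_mul] <;> simp
      have hpz : π z = π x * π y := by rw [hxy, map_mul]
      have hcxy : Commute (π x) (π y) := by
        have hyz : π y = π x⁻¹ * π z := by
          rw [← map_mul]
          congr 1
          rw [hxy]; group
        rw [hyz]
        have c1 : Commute (π x) (π x⁻¹) := by
          unfold Commute SemiconjBy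
          rw [← map_mul, ← map_mul]; simp
        exact c1.mul_right hxz
      rw [hpz]
      exact isNilpotent_mul_of_commute hcxy hx hyunip
    -- Step 3 : π z commutes with everything
    have hcent : ∀ h : Γ, Commute (π z) (π h) := by
      intro h
      exact commute_of_commutator_eq_one π
        (IH z h hzunip ((Subgroup.mem_upperCentralSeries_succ_iff.mp hmem) h))
    -- Step 4 : Schur
    have : π z - 1 = 0 := by
      refine nilpotent_commuting_eq_zero π hirr _ hzunip ?_
      intro γ
      exact ((hcent γ).sub_left (Commute.one_left (π γ)))
    rw [sub_eq_zero] at this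
    exact this

end IrrCase

section KeyLemma

universe u

lemma key_aux (k : Type*) [Field k] {Γ : Type*} [Group Γ] [Group.IsNilpotent Γ]
    (S : Set Γ) (hS : Subgroup.closure S = ⊤) :
    ∀ (n : ℕ) (W : Type u) (_ : AddCommGroup W) (_ : Module k W)
      (_ : FiniteDimensional k W) (π : Γ →* Module.End k W),
      Module.finrank k W = n → (∀ s ∈ S, IsNilpotent (π s - 1)) →
      ∀ γ : Γ, IsNilpotent (π γ - 1) := by
  intro n
  induction n using Nat.strong_induction_on with
  | _ n IH =>
  intro W _ _ _ π hrank hgen γ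
  by_cases hred : ∃ p : Submodule k W, (∀ δ : Γ, p.map (π δ) ≤ p) ∧ p ≠ ⊥ ∧ p ≠ ⊤
  · obtain ⟨p, hinv, hpbot, hptop⟩ := hred
    have hinv' : ∀ δ : Γ, ∀ x ∈ p, π δ x ∈ p := fun δ x hx => hinv δ ⟨x, hx, rfl⟩
    let πres : Γ →* Module.End k p :=
      { toFun := fun δ => (π δ).restrict (hinv' δ)
        map_one' := by
          ext x
          simp [LinearMap.restrict_apply]
        map_mul' := by
          intro a b
          ext x
          simp [LinearMap.restrict_apply, Module.End.mul_apply] }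
    let πquot : Γ →* Module.End k (W ⧸ p) :=
      { toFun := fun δ => p.mapQ p (π δ) (fun x hx => hinv' δ x hx)
        map_one' := by
          apply LinearMap.ext
          intro w
          obtain ⟨x, rfl⟩ := Submodule.Quotient.mk_surjective p w
          simp [Submodule.mapQ_apply]
        map_mul' := by
          intro a b
          apply LinearMap.ext
          intro w
          obtain ⟨x, rfl⟩ := Submodule.Quotient.mk_surjective p w
          simp [Submodule.mapQ_apply, Module.End.mul_apply] }
    have hplt : Module.finrank k p < n := hrank ▸ Submodule.finrank_lt hptop
    have hppos : 0 < Module.finrank k p := by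
      rw [Module.finrank_pos_iff]
      exact Submodule.nontrivial_iff_ne_bot.mpr hpbot
    have hqsum := Submodule.finrank_quotient_add_finrank p
    have hqlt : Module.finrank k (W ⧸ p) < n := by rw [hrank] at hqsum; omega
    have hresgen : ∀ s ∈ S, IsNilpotent (πres s - 1) := by
      intro s hs
      obtain ⟨m, hm⟩ := hgen s hs
      refine ⟨m, ?_⟩
      ext x
      show ((((π s).restrict (hinv' s) - 1) ^ m) x : W) = _
      rw [restrict_pow_sub_one_apply p (π s) (hinv' s) m x]
      have := LinearMap.congr_fun hm (x : W)
      simpa using this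
    have hquotgen : ∀ s ∈ S, IsNilpotent (πquot s - 1) := by
      intro s hs
      obtain ⟨m, hm⟩ := hgen s hs
      refine ⟨m, ?_⟩
      apply LinearMap.ext
      intro w
      obtain ⟨x, rfl⟩ := Submodule.Quotient.mk_surjective p w
      show ((p.mapQ p (π s) (fun x hx => hinv' s x hx) - 1) ^ m) (Submodule.Quotient.mk x) = _
      rw [quot_pow_sub_one_apply p (π s) (fun x hx => hinv' s x hx) m x]
      have := LinearMap.congr_fun hm x
      simp only [LinearMap.zero_apply] at this ⊢
      rw [this, Submodule.Quotient.mk_zero]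
    obtain ⟨a, ha⟩ := IH _ hplt p inferInstance inferInstance inferInstance πres rfl hresgen γ
    obtain ⟨b, hb⟩ := IH _ hqlt (W ⧸ p) inferInstance inferInstance inferInstance πquot rfl hquotgen γ
    refine ⟨a + b, ?_⟩
    ext x
    rw [pow_add]
    simp only [Module.End.mul_apply, LinearMap.zero_apply]
    have hy : ((π γ - 1) ^ b) x ∈ p := by
      rw [← Submodule.Quotient.mk_eq_zero p]
      rw [← quot_pow_sub_one_apply p (π γ) (fun x hx => hinv' γ x hx) b x]
      have := LinearMap.congr_fun hb (Submodule.Quotient.mk x)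
      exact this.trans (LinearMap.zero_apply _)
    have h0 : (((π γ).restrict (hinv' γ) - 1) ^ a) (⟨((π γ - 1) ^ b) x, hy⟩ : p) = 0 := by
      have := LinearMap.congr_fun ha (⟨((π γ - 1) ^ b) x, hy⟩ : p)
      exact this.trans (LinearMap.zero_apply _)
    have h1 := restrict_pow_sub_one_apply p (π γ) (hinv' γ) a ⟨((π γ - 1) ^ b) x, hy⟩
    rw [h0] at h1
    simpa using h1.symm
  · have hirr : ∀ p : Submodule k W, (∀ δ : Γ, p.map (π δ) ≤ p) → p = ⊥ ∨ p = ⊤ := by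
      intro p hp
      by_contra hcon
      push_neg at hcon
      exact hred ⟨p, hp, hcon.1, hcon.2⟩
    obtain ⟨c, hc⟩ := Group.IsNilpotent.nilpotent Γ
    have hsone : ∀ s ∈ S, π s = 1 := by
      intro s hs
      have hcomm : ∀ g : Γ, Commute (π s) (π g) := by
        intro g
        apply commute_of_commutator_eq_one π
        apply irr_commutator_eq_one π hirr c s g (hgen s hs)
        rw [hc]
        trivial
      have h0 : π s - 1 = 0 := nilpotent_commuting_eq_zero π hirr _ (hgen s hs)
        (fun δ => (hcomm δ).sub_left (Commute.one_left _))
      rwa [sub_eq_zero] at h0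
    have hall : π γ = 1 := by
      have hδ : γ ∈ Subgroup.closure S := hS ▸ Subgroup.mem_top γ
      induction hδ using Subgroup.closure_induction with
      | mem x hx => exact hsone x hx
      | one => exact map_one π
      | mul x y _ _ hx hy => rw [map_mul, hx, hy, one_mul]
      | inv x _ hx =>
        have : π x⁻¹ * π x = 1 := by rw [← map_mul]; simp
        rw [hx, mul_one] at this
        exact this
    rw [hall]
    exact ⟨1, by simp⟩

end KeyLemma
section AffHom
variable {V : Type*} [NormedAddCommGroup V] [NormedSpace ℝ V]

lemma affToLin_apply (g : V ≃ᵃ[ℝ] V) (v : V) (t : ℝ) :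
    affToLin g (v, t) = (g.linear v + t • g 0, t) := by
  simp [affToLin, LinearMap.toSpanSingleton_apply]

lemma affine_apply_eq (g : V ≃ᵃ[ℝ] V) (v : V) : g v = g.linear v + g 0 := by
  have := (g : V →ᵃ[ℝ] V).map_vadd 0 v
  simpa [vadd_eq_add] using this

def affHom : (V ≃ᵃ[ℝ] V) →* Module.End ℝ (V × ℝ) where
  toFun := affToLin
  map_one' := by
    apply LinearMap.ext
    rintro ⟨v, t⟩
    rw [affToLin_apply]
    simp [AffineEquiv.one_def]
  map_mul' := by
    intro g h
    apply LinearMap.ext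
    rintro ⟨v, t⟩
    show affToLin (g * h) (v, t) = affToLin g (affToLin h (v, t))
    rw [affToLin_apply, affToLin_apply, affToLin_apply]
    have h1 : (g * h : V ≃ᵃ[ℝ] V).linear v = g.linear (h.linear v) := by
      rfl
    have h2 : (g * h : V ≃ᵃ[ℝ] V) 0 = g.linear (h 0) + g 0 := by
      rw [AffineEquiv.mul_def]
      rw [AffineEquiv.trans_apply]
      exact affine_apply_eq g (h 0)
    rw [h1, h2]
    rw [Prod.mk.injEq]
    constructor
    · rw [map_add, map_smul, smul_add]
      abel
    · rfl

end AffHom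


lemma pow_finrank_eq_zero {k W : Type*} [Field k] [AddCommGroup W] [Module k W]
    [FiniteDimensional k W] {φ : Module.End k W} (h : IsNilpotent φ) :
    φ ^ Module.finrank k W = 0 := by
  have h2 := h.charpoly_eq_X_pow_finrank
  have h3 := φ.aeval_self_charpoly
  rw [h2] at h3
  simpa [map_pow, Polynomial.aeval_X] using h3


theorem unipotent_on_generators_of_nilpotent
    {V : Type*} [NormedAddCommGroup V] [NormedSpace ℝ V] [FiniteDimensional ℝ V]
    {Γ : Type*} [Group Γ] [Group.IsNilpotent Γ]
    (S : Set Γ) (hS : Subgroup.closure S = ⊤)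
    (ρ : Γ →* (V ≃ᵃ[ℝ] V)) (hρ : ∀ s ∈ S, IsUnipotentAff (ρ s)) :
    (∀ γ : Γ, IsUnipotentAff (ρ γ)) ∧
    ∀ (m : ℕ) (γs : Fin m → Γ), Subgroup.closure (Set.range γs) = ⊤ →
      {σ : Γ →* (V ≃ᵃ[ℝ] V) | ∀ γ : Γ, IsUnipotentAff (σ γ)} =
        {σ : Γ →* (V ≃ᵃ[ℝ] V) |
          ∀ i : Fin m, (affToLin (σ (γs i)) - 1) ^ (Module.finrank ℝ V + 1) = 0} := by
  have hmain : ∀ (σ : Γ →* (V ≃ᵃ[ℝ] V)) (T : Set Γ), Subgroup.closure T = ⊤ →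
      (∀ s ∈ T, IsUnipotentAff (σ s)) → ∀ γ : Γ, IsUnipotentAff (σ γ) := by
    intro σ T hT hu γ
    exact key_aux ℝ T hT (Module.finrank ℝ (V × ℝ)) (V × ℝ) inferInstance inferInstance
      inferInstance (affHom.comp σ) rfl hu γ
  refine ⟨hmain ρ S hS hρ, ?_⟩
  intro m γs hγs
  ext σ
  simp only [Set.mem_setOf_eq]
  constructor
  · intro h i
    have hn : IsNilpotent (affToLin (σ (γs i)) - 1) := h (γs i)
    have h2 := pow_finrank_eq_zero hn
    have h3 : Module.finrank ℝ (V × ℝ) = Module.finrank ℝ V + 1 := by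
      rw [Module.finrank_prod, Module.finrank_self]
    rwa [h3] at h2
  · intro h γ
    refine hmain σ (Set.range γs) hγs ?_ γ
    rintro s ⟨i, rfl⟩
    exact ⟨Module.finrank ℝ V + 1, h i⟩

end
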